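/- Let G be a connected {house, hole}-free graph with a cycle C = (x_1, x_2, ..., x_k) of length at least 5 such that x_2 x_k is an edge (a chord), and x_1 and x_2 have no neighbours in C other than their neighbours on the cycle and this chord. Then x_3 x_k is an edge of G. -/

import Mathlib

open SimpleGraph

variable {V : Type*}

/-- The interval between two vertices: vertices on some shortest path. -/
def interval (G : SimpleGraph V) (x y : V) : Set V :=
  {z | G.dist x y = G.dist x z + G.dist z y}

/-- The line generated by two vertices. -/
def line (G : SimpleGraph V) (x y : V) : Set V :=
  {z | z ∈ interval G x y ∨ x ∈ interval G z y ∨ y ∈ interval G x z}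

/-- The house graph: a 5-cycle 0-1-2-3-4-0 plus the chord 1-4. -/
def house : SimpleGraph (Fin 5) :=
  SimpleGraph.fromEdgeSet {s(0,1), s(1,2), s(2,3), s(3,4), s(4,0), s(1,4)}

/-- A graph is {house, hole}-free if it has no induced house and no induced
cycle of length at least 5. -/
def HHFree (G : SimpleGraph V) : Prop :=
  IsEmpty (house ↪g G) ∧ ∀ n, 5 ≤ n → IsEmpty (cycleGraph n ↪g G)

/-- A graph is hole-free if it has no induced cycle of length at least 5. -/
def HoleFree (G : SimpleGraph V) : Prop :=
  ∀ n, 5 ≤ n → IsEmpty (cycleGraph n ↪g G)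

/-- A good pair: two vertices at distance 2 with a common neighbour `c`
such that `line u c = line c v`. -/
def GoodPair (G : SimpleGraph V) (u v : V) : Prop :=
  G.dist u v = 2 ∧ ∃ c, G.Adj u c ∧ G.Adj c v ∧ line G u c = line G c v

/-- The set of all lines of a graph (generated by pairs of distinct vertices). -/
def lineSet (G : SimpleGraph V) : Set (Set V) :=
  {ℓ | ∃ u v : V, u ≠ v ∧ line G u v = ℓ}

private lemma modHelper (n a b : ℕ) (hn : 2 ≤ n) (ha : a < n) (hb : b < n) :
    ((n - b) + a) % n = 1 ↔ (a = b + 1 ∨ (b = n - 1 ∧ a = 0)) := by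
  rcases le_or_gt b a with h | h
  · have he : (n - b) + a = n + (a - b) := by omega
    rw [he, Nat.add_mod_left, Nat.mod_eq_of_lt (by omega)]
    omega
  · rw [Nat.mod_eq_of_lt (by omega)]
    omega

theorem stmt6 (G : SimpleGraph V) (hG : G.Connected) (hH : HHFree G)
    (k : ℕ) (hk : 5 ≤ k) (x : Fin k → V) (hinj : Function.Injective x)
    (hcyc : ∀ i : Fin k, G.Adj (x i) (x (i + ⟨1, by omega⟩)))
    (hchord : G.Adj (x ⟨1, by omega⟩) (x ⟨k - 1, by omega⟩))
    (hx1 : ∀ i : Fin k, G.Adj (x ⟨0, by omega⟩) (x i) →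
      i = ⟨1, by omega⟩ ∨ i = ⟨k - 1, by omega⟩)
    (hx2 : ∀ i : Fin k, G.Adj (x ⟨1, by omega⟩) (x i) →
      i = ⟨0, by omega⟩ ∨ i = ⟨2, by omega⟩ ∨ i = ⟨k - 1, by omega⟩) :
    G.Adj (x ⟨2, by omega⟩) (x ⟨k - 1, by omega⟩) := by
  classical
  have hk0 : 0 < k := by omega
  set X : ℕ → V := fun a => x ⟨a % k, Nat.mod_lt a hk0⟩ with hXdef
  have hXeq : ∀ (a : ℕ) (h : a < k), X a = x ⟨a, h⟩ := by
    intro a h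
    simp only [hXdef]
    congr 1
    exact Fin.ext (Nat.mod_eq_of_lt h)
  have hXinj : ∀ a b : ℕ, a < k → b < k → X a = X b → a = b := by
    intro a b ha hb h
    rw [hXeq a ha, hXeq b hb] at h
    simpa [Fin.ext_iff] using hinj h
  have hstep : ∀ a : ℕ, a + 1 < k → G.Adj (X a) (X (a + 1)) := by
    intro a h
    rw [hXeq a (by omega), hXeq (a + 1) h]
    have h2 := hcyc ⟨a, by omega⟩
    have heq : (⟨a, by omega⟩ + ⟨1, by omega⟩ : Fin k) = ⟨a + 1, h⟩ := by
      rw [Fin.add_def]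
      exact Fin.ext (by simp [Nat.mod_eq_of_lt h])
    rwa [heq] at h2
  have hwrap : G.Adj (X (k - 1)) (X 0) := by
    rw [hXeq (k - 1) (by omega), hXeq 0 hk0]
    have h2 := hcyc ⟨k - 1, by omega⟩
    have heq : (⟨k - 1, by omega⟩ + ⟨1, by omega⟩ : Fin k) = ⟨0, hk0⟩ := by
      rw [Fin.add_def]
      refine Fin.ext ?_
      simp only
      rw [Nat.sub_add_cancel (by omega), Nat.mod_self]
    rwa [heq] at h2
  have hchord' : G.Adj (X 1) (X (k - 1)) := by
    rw [hXeq 1 (by omega), hXeq (k - 1) (by omega)]; exact hchord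
  have hX0 : ∀ b : ℕ, b < k → G.Adj (X 0) (X b) → b = 1 ∨ b = k - 1 := by
    intro b hb hadj
    rw [hXeq 0 hk0, hXeq b hb] at hadj
    rcases hx1 ⟨b, hb⟩ hadj with h | h <;> simp [Fin.ext_iff] at h <;> omega
  have hX1 : ∀ b : ℕ, b < k → G.Adj (X 1) (X b) → b = 0 ∨ b = 2 ∨ b = k - 1 := by
    intro b hb hadj
    rw [hXeq 1 (by omega), hXeq b hb] at hadj
    rcases hx2 ⟨b, hb⟩ hadj with h | h | h <;> simp [Fin.ext_iff] at h <;> omega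
  -- greedy induced path from X 2 to X (k-1)
  set P : ℕ → ℕ → Prop := fun p b => p < b ∧ G.Adj (X p) (X b) with hPdef
  set f : ℕ → ℕ := fun j => Nat.rec 2
    (fun _ p => if p < k - 1 then Nat.findGreatest (P p) (k - 1) else k - 1) j with hfdef
  have hf0 : f 0 = 2 := rfl
  have hfs : ∀ j, f (j + 1) =
      if f j < k - 1 then Nat.findGreatest (P (f j)) (k - 1) else k - 1 := fun j => rfl
  have hub : ∀ j, f j ≤ k - 1 := by
    intro j
    induction j with
    | zero => rw [hf0]; omega
    | succ j ih =>
      rw [hfs j]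
      split
      · exact Nat.findGreatest_le _
      · exact le_refl _
  have hkey : ∀ j, f j < k - 1 → f j < f (j + 1) ∧ G.Adj (X (f j)) (X (f (j + 1))) := by
    intro j h
    have h1 : P (f j) (f j + 1) := ⟨by omega, hstep _ (by omega)⟩
    have h3 : P (f j) (Nat.findGreatest (P (f j)) (k - 1)) :=
      Nat.findGreatest_spec (by omega) h1
    rw [hfs j, if_pos h]
    exact h3
  have hmax : ∀ j b, f j < k - 1 → b ≤ k - 1 → f (j + 1) < b → ¬G.Adj (X (f j)) (X b) := by
    intro j b h hb hlt hadj
    have h5 : f j < b := by have := (hkey j h).1; omega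
    rw [hfs j, if_pos h] at hlt
    exact Nat.findGreatest_is_greatest hlt hb ⟨h5, hadj⟩
  have hstay : ∀ j, f j = k - 1 → f (j + 1) = k - 1 := by
    intro j h
    rw [hfs j, if_neg (by omega)]
  have hgrow : ∀ j, f j = k - 1 ∨ 2 + j ≤ f j := by
    intro j
    induction j with
    | zero => right; rw [hf0]
    | succ j ih =>
      rcases ih with h | h
      · left; exact hstay j h
      · by_cases hlt : f j < k - 1
        · right; have := (hkey j hlt).1; omega
        · left; exact hstay j (by have := hub j; omega)
  have hex : ∃ j, f j = k - 1 := by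
    refine ⟨k - 3, ?_⟩
    rcases hgrow (k - 3) with h | h
    · exact h
    · have := hub (k - 3); omega
  set m := Nat.find hex with hmdef
  have hm : f m = k - 1 := Nat.find_spec hex
  have hless : ∀ j, j < m → f j < k - 1 := by
    intro j hj
    have h1 := Nat.find_min hex hj
    have := hub j
    omega
  have hm1 : 1 ≤ m := by
    rcases Nat.eq_zero_or_pos m with h | h
    · rw [h] at hm; rw [hf0] at hm; omega
    · exact h
  have hmono : ∀ j, j ≤ m → ∀ i, i < j → f i < f j := by
    intro j
    induction j with
    | zero => omega
    | succ j ih =>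
      intro hjm i hi
      have hj : f j < f (j + 1) := (hkey j (hless j (by omega))).1
      rcases Nat.lt_succ_iff_lt_or_eq.mp hi with h | h
      · exact lt_trans (ih (by omega) i h) hj
      · rw [h]; exact hj
  rcases Nat.lt_or_ge m 2 with hm2 | hm2
  · -- m = 1 : done
    have h01 : (0 : ℕ) + 1 = m := by omega
    have h2 := (hkey 0 (hless 0 (by omega))).2
    rw [hf0, h01, hm] at h2
    rw [hXeq 2 (by omega), hXeq (k - 1) (by omega)] at h2
    exact h2
  exfalso
  rcases Nat.lt_or_ge m 3 with hm3 | hm3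
  · -- m = 2 : house
    have hf1lt : f 1 < k - 1 := hless 1 (by omega)
    have hf1gt : 2 < f 1 := by
      have h2 := (hkey 0 (hless 0 (by omega))).1
      rwa [hf0] at h2
    have e01 : G.Adj (X 0) (X 1) := hstep 0 (by omega)
    have e12 : G.Adj (X 1) (X 2) := hstep 1 (by omega)
    have e23 : G.Adj (X 2) (X (f 1)) := by
      have h2 := (hkey 0 (hless 0 (by omega))).2
      rwa [hf0] at h2
    have e34 : G.Adj (X (f 1)) (X (k - 1)) := by
      have h2 := (hkey 1 hf1lt).2
      have h12 : (1 : ℕ) + 1 = m := by omega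
      rwa [h12, hm] at h2
    have e40 : G.Adj (X (k - 1)) (X 0) := hwrap
    have e14 : G.Adj (X 1) (X (k - 1)) := hchord'
    have n24 : ¬G.Adj (X 2) (X (k - 1)) := by
      have h2 := hmax 0 (k - 1) (hless 0 (by omega)) (le_refl _) (by exact hf1lt)
      rwa [hf0] at h2
    have n13 : ¬G.Adj (X 1) (X (f 1)) := fun h => by
      rcases hX1 (f 1) (by omega) h with h' | h' | h' <;> omega
    have n02 : ¬G.Adj (X 0) (X 2) := fun h => by
      rcases hX0 2 (by omega) h with h' | h' <;> omega
    have n03 : ¬G.Adj (X 0) (X (f 1)) := fun h => by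
      rcases hX0 (f 1) (by omega) h with h' | h' <;> omega
    have e10 : G.Adj (X 1) (X 0) := e01.symm
    have e21 : G.Adj (X 2) (X 1) := e12.symm
    have e32 : G.Adj (X (f 1)) (X 2) := e23.symm
    have e43 : G.Adj (X (k - 1)) (X (f 1)) := e34.symm
    have e04 : G.Adj (X 0) (X (k - 1)) := e40.symm
    have e41 : G.Adj (X (k - 1)) (X 1) := e14.symm
    have n42 : ¬G.Adj (X (k - 1)) (X 2) := fun h => n24 h.symm
    have n31 : ¬G.Adj (X (f 1)) (X 1) := fun h => n13 h.symm
    have n20 : ¬G.Adj (X 2) (X 0) := fun h => n02 h.symm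
    have n30 : ¬G.Adj (X (f 1)) (X 0) := fun h => n03 h.symm
    set g : Fin 5 → V := ![X 0, X 1, X 2, X (f 1), X (k - 1)] with hgdef
    have hginj : Function.Injective g := by
      intro a b hab
      fin_cases a <;> fin_cases b <;>
        simp only [hgdef, Matrix.cons_val_zero, Matrix.cons_val_one, Matrix.head_cons,
          Matrix.cons_val_two, Matrix.tail_cons, Matrix.cons_val_three,
          Matrix.cons_val_four, Matrix.cons_val_fin_one, Fin.mk_zero, Fin.mk_one,
          Fin.isValue] at hab ⊢ <;>
        first
          | rfl
          | exact absurd (hXinj _ _ (by omega) (by omega) hab) (by omega)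
    have hemb : house ↪g G := by
      refine ⟨⟨g, hginj⟩, ?_⟩
      intro a b
      fin_cases a <;> fin_cases b <;>
        simp only [hgdef, Matrix.cons_val_zero, Matrix.cons_val_one, Matrix.head_cons,
          Matrix.cons_val_two, Matrix.tail_cons, Matrix.cons_val_three,
          Matrix.cons_val_four, Matrix.cons_val_fin_one, Fin.mk_zero, Fin.mk_one,
          Fin.isValue] <;>
        simp [house, Sym2.eq_iff] <;>
        first
          | exact G.loopless _
          | assumption
    exact hH.1.false hemb
  · -- m >= 3 : hole of length m + 2
    have hflb : ∀ j, 2 ≤ f j := by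
      intro j
      induction j with
      | zero => rw [hf0]
      | succ j ih =>
        by_cases h : f j < k - 1
        · have := (hkey j h).1; omega
        · rw [hfs j, if_neg h]; omega
    set F : ℕ → ℕ := fun t => if t = 0 then 1 else f (t - 1) with hFdef
    have hF0 : F 0 = 1 := rfl
    have hFs : ∀ t, F (t + 1) = f t := fun t => rfl
    have hFub : ∀ t, F t ≤ k - 1 := by
      intro t
      cases t with
      | zero => rw [hF0]; omega
      | succ t => rw [hFs]; exact hub t
    have hFmono : ∀ s t, s < t → t ≤ m + 1 → F s < F t := by
      intro s t hst htm
      cases s with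
      | zero =>
        cases t with
        | zero => omega
        | succ t => rw [hF0, hFs]; have := hflb t; omega
      | succ s =>
        cases t with
        | zero => omega
        | succ t =>
          rw [hFs, hFs]
          exact hmono t (by omega) s (by omega)
    have hEdge : ∀ t, t ≤ m → G.Adj (X (F t)) (X (F (t + 1))) := by
      intro t htm
      cases t with
      | zero =>
        rw [hF0, hFs, hf0]
        exact hstep 1 (by omega)
      | succ t =>
        rw [hFs, hFs]
        exact (hkey t (hless t (by omega))).2
    have hEwrap : G.Adj (X (F 0)) (X (F (m + 1))) := by
      rw [hF0, hFs, hm]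
      exact hchord'
    have hNon : ∀ s t, s + 2 ≤ t → t ≤ m + 1 → ¬(s = 0 ∧ t = m + 1) →
        ¬G.Adj (X (F s)) (X (F t)) := by
      intro s t hst htm hne hadj
      cases s with
      | zero =>
        have ht : t ≠ m + 1 := fun h => hne ⟨rfl, h⟩
        obtain ⟨t', rfl⟩ : ∃ t', t = t' + 1 := ⟨t - 1, by omega⟩
        rw [hF0, hFs] at hadj
        have h1 : f 0 < f t' := hmono t' (by omega) 0 (by omega)
        have h2 : f t' < f m := hmono m (le_refl m) t' (by omega)
        rw [hf0] at h1
        rw [hm] at h2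
        rcases hX1 (f t') (by have := hub t'; omega) hadj with h' | h' | h' <;>
          [skip; skip; skip] <;> first | omega | (have := hflb t'; omega)
      | succ s =>
        obtain ⟨t', rfl⟩ : ∃ t', t = t' + 1 := ⟨t - 1, by omega⟩
        rw [hFs, hFs] at hadj
        have hsm : s < m := by omega
        have hlt : f (s + 1) < f t' := hmono t' (by omega) (s + 1) (by omega)
        exact hmax s (f t') (hless s hsm) (hub t') hlt hadj
    have hforward : ∀ s t, s < t → t ≤ m + 1 → G.Adj (X (F s)) (X (F t)) →
        t = s + 1 ∨ (s = 0 ∧ t = m + 1) := by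
      intro s t hst htm hadj
      by_contra hcon
      push_neg at hcon
      exact hNon s t (by omega) htm (fun hh => hcon.2 hh.1 hh.2) hadj
    set c : Fin (m + 2) → V := fun i => X (F i.val) with hcdef
    have hcinj : Function.Injective c := by
      intro a b hab
      simp only [hcdef] at hab
      have h1 := hXinj _ _ (by have := hFub a.val; omega) (by have := hFub b.val; omega) hab
      rcases lt_trichotomy a.val b.val with h | h | h
      · exact absurd h1 (Nat.ne_of_lt (hFmono _ _ h (by omega)))
      · exact Fin.ext h
      · exact absurd h1.symm (Nat.ne_of_lt (hFmono _ _ h (by omega)))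
    have hsub : ∀ u v : Fin (m + 2), ((u - v).val = 1) ↔
        (u.val = v.val + 1 ∨ (v.val = m + 1 ∧ u.val = 0)) := by
      intro u v
      rw [Fin.sub_def]
      simp only
      rw [modHelper (m + 2) u.val v.val (by omega) u.isLt v.isLt]
      omega
    have hrel : ∀ a b : Fin (m + 2), G.Adj (c a) (c b) ↔ (cycleGraph (m + 2)).Adj a b := by
      intro a b
      rw [cycleGraph_adj', hsub, hsub]
      simp only [hcdef]
      constructor
      · intro hadj
        rcases lt_trichotomy a.val b.val with h | h | h
        · rcases hforward a.val b.val h (by omega) hadj with h' | h' <;> omega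
        · exact absurd hadj (by rw [show (a : Fin (m+2)) = b from Fin.ext h]; exact G.irrefl)
        · rcases hforward b.val a.val h (by omega) hadj.symm with h' | h' <;> omega
      · intro h
        rcases h with h | h
        · rcases h with h1 | ⟨h1, h2⟩
          · rw [h1]
            exact (hEdge b.val (by omega)).symm
          · rw [h1, h2]
            exact hEwrap
        · rcases h with h1 | ⟨h1, h2⟩
          · rw [h1]
            exact hEdge a.val (by omega)
          · rw [h1, h2]
            exact hEwrap.symm
    exact (hH.2 (m + 2) (by omega)).false ⟨⟨c, hcinj⟩, fun {a b} => hrel a b⟩
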